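/- In ℝ² with γ := e_1 and ν := e_2, let Δ := {±2γ, ±2ν, γ+ν, γ−ν, −γ+ν, −γ−ν}. Then Σ := {γ−ν, 2ν} is a base of Δ; moreover Σ' := {ν−γ, 2γ} is also a base of Δ and Δ ∩ ℕΣ' = ((Δ ∩ ℕΣ) \ {γ−ν}) ∪ {ν−γ}. (Δ is the restricted root system C(1,1) of the pair (d(2,1;a), osp(2|2)×so(2)), and Σ' is the singular reflection of Σ in γ−ν.) -/

import Mathlib

open Pointwise

/-- `NComb S` is the set of all finite linear combinations of elements of `S`
with non-negative integer coefficients, i.e. the additive submonoid generated by `S`. -/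
def NComb {V : Type*} [AddCommMonoid V] (S : Set V) : Set V :=
  (AddSubmonoid.closure S : Set V)

/-- `B` is a base of `Δ`: `B ⊆ Δ`, `B` is linearly independent over `ℝ`, and
`Δ ⊆ ℕB ∪ (−ℕB)`. -/
def IsBase {V : Type*} [AddCommGroup V] [Module ℝ V] (Δ B : Set V) : Prop :=
  B ⊆ Δ ∧ LinearIndependent ℝ (fun x : B => (x : V)) ∧
    Δ ⊆ NComb B ∪ (-NComb B)
/-- `γ = e₁` in `ℝ²`. -/
def g : Fin 2 → ℝ := ![1, 0]

/-- `ν = e₂` in `ℝ²`. -/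
def v : Fin 2 → ℝ := ![0, 1]

/-- The restricted root system `C(1,1) = {±2γ, ±2ν, γ+ν, γ−ν, −γ+ν, −γ−ν}` of the pair
`(d(2,1;a), osp(2|2) × so(2))`. -/
def Δ13 : Set (Fin 2 → ℝ) :=
  {(2 : ℝ) • g, -((2 : ℝ) • g), (2 : ℝ) • v, -((2 : ℝ) • v),
    g + v, g - v, -g + v, -g - v}

lemma dA13 : (2 : ℝ) • g ∈ Δ13 := Or.inl rfl
lemma dB13 : -((2 : ℝ) • g) ∈ Δ13 := Or.inr (Or.inl rfl)
lemma dC13 : (2 : ℝ) • v ∈ Δ13 := Or.inr (Or.inr (Or.inl rfl))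
lemma dD13 : -((2 : ℝ) • v) ∈ Δ13 := Or.inr (Or.inr (Or.inr (Or.inl rfl)))
lemma dE13 : g + v ∈ Δ13 := Or.inr (Or.inr (Or.inr (Or.inr (Or.inl rfl))))
lemma dF13 : g - v ∈ Δ13 := Or.inr (Or.inr (Or.inr (Or.inr (Or.inr (Or.inl rfl)))))
lemma dG13 : -g + v ∈ Δ13 := Or.inr (Or.inr (Or.inr (Or.inr (Or.inr (Or.inr (Or.inl rfl))))))
lemma dH13 : -g - v ∈ Δ13 := Or.inr (Or.inr (Or.inr (Or.inr (Or.inr (Or.inr (Or.inr rfl))))))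

lemma memN13 {a b p : Fin 2 → ℝ} (m n : ℕ) (h : m • a + n • b = p) : p ∈ NComb {a, b} :=
  (AddSubmonoid.mem_closure_pair a b p).mpr ⟨m, n, h⟩

lemma notmemN13 {a b p : Fin 2 → ℝ}
    (h : ∀ m n : ℕ, ¬ ((m : ℝ) * a 0 + n * b 0 = p 0 ∧ (m : ℝ) * a 1 + n * b 1 = p 1)) :
    p ∉ NComb {a, b} := by
  intro hp
  obtain ⟨m, n, hmn⟩ := (AddSubmonoid.mem_closure_pair a b p).mp hp
  exact h m n ⟨by simpa using congrFun hmn 0, by simpa using congrFun hmn 1⟩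

/-- `Σ = {γ−ν, 2ν}` is a base of `Δ`; `Σ' = {ν−γ, 2γ}` is also a base, obtained from `Σ` by
the singular reflection in `γ−ν`. -/
theorem statement13 :
    IsBase Δ13 {g - v, (2 : ℝ) • v} ∧
    IsBase Δ13 {v - g, (2 : ℝ) • g} ∧
    Δ13 ∩ NComb {v - g, (2 : ℝ) • g}
      = ((Δ13 ∩ NComb {g - v, (2 : ℝ) • v}) \ {g - v}) ∪ {v - g} := by
  -- memberships in NComb {g-v, 2v}
  have m1a : (2 : ℝ) • g ∈ NComb {g - v, (2 : ℝ) • v} :=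
    memN13 2 1 (by funext i; fin_cases i <;> simp [g, v])
  have m1b : (2 : ℝ) • v ∈ NComb {g - v, (2 : ℝ) • v} :=
    memN13 0 1 (by funext i; fin_cases i <;> simp [g, v])
  have m1c : g + v ∈ NComb {g - v, (2 : ℝ) • v} :=
    memN13 1 1 (by funext i; fin_cases i <;> simp [g, v] <;> norm_num)
  have m1d : g - v ∈ NComb {g - v, (2 : ℝ) • v} :=
    memN13 1 0 (by funext i; fin_cases i <;> simp [g, v])
  -- non-memberships in NComb {g-v, 2v}
  have n1a : -((2 : ℝ) • g) ∉ NComb {g - v, (2 : ℝ) • v} := by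
    apply notmemN13; intro m n ⟨h0, h1⟩
    simp [g, v] at h0 h1
    simp [h0] at h1
    have : (0:ℝ) ≤ n := Nat.cast_nonneg n
    linarith
  have n1b : -((2 : ℝ) • v) ∉ NComb {g - v, (2 : ℝ) • v} := by
    apply notmemN13; intro m n ⟨h0, h1⟩
    simp [g, v] at h0 h1
    simp [h0] at h1
    have : (0:ℝ) ≤ n := Nat.cast_nonneg n
    linarith
  have n1c : -g + v ∉ NComb {g - v, (2 : ℝ) • v} := by
    apply notmemN13; intro m n ⟨h0, h1⟩
    simp [g, v] at h0 h1
    have : (0:ℝ) ≤ m := Nat.cast_nonneg m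
    linarith
  have n1d : -g - v ∉ NComb {g - v, (2 : ℝ) • v} := by
    apply notmemN13; intro m n ⟨h0, h1⟩
    simp [g, v] at h0 h1
    have : (0:ℝ) ≤ m := Nat.cast_nonneg m
    linarith
  -- memberships in NComb {v-g, 2g}
  have m2a : (2 : ℝ) • g ∈ NComb {v - g, (2 : ℝ) • g} :=
    memN13 0 1 (by funext i; fin_cases i <;> simp [g, v])
  have m2b : (2 : ℝ) • v ∈ NComb {v - g, (2 : ℝ) • g} :=
    memN13 2 1 (by funext i; fin_cases i <;> simp [g, v])
  have m2c : g + v ∈ NComb {v - g, (2 : ℝ) • g} :=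
    memN13 1 1 (by funext i; fin_cases i <;> simp [g, v] <;> norm_num)
  have m2d : -g + v ∈ NComb {v - g, (2 : ℝ) • g} :=
    memN13 1 0 (by funext i; fin_cases i <;> simp [g, v])
  -- non-memberships in NComb {v-g, 2g}
  have n2a : -((2 : ℝ) • g) ∉ NComb {v - g, (2 : ℝ) • g} := by
    apply notmemN13; intro m n ⟨h0, h1⟩
    simp [g, v] at h0 h1
    simp [h1] at h0
    have : (0:ℝ) ≤ n := Nat.cast_nonneg n
    linarith
  have n2b : -((2 : ℝ) • v) ∉ NComb {v - g, (2 : ℝ) • g} := by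
    apply notmemN13; intro m n ⟨h0, h1⟩
    simp [g, v] at h0 h1
    have : (0:ℝ) ≤ m := Nat.cast_nonneg m
    linarith
  have n2c : g - v ∉ NComb {v - g, (2 : ℝ) • g} := by
    apply notmemN13; intro m n ⟨h0, h1⟩
    simp [g, v] at h0 h1
    have : (0:ℝ) ≤ m := Nat.cast_nonneg m
    linarith
  have n2d : -g - v ∉ NComb {v - g, (2 : ℝ) • g} := by
    apply notmemN13; intro m n ⟨h0, h1⟩
    simp [g, v] at h0 h1
    have : (0:ℝ) ≤ m := Nat.cast_nonneg m
    linarith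
  -- first base
  have base1 : IsBase Δ13 {g - v, (2 : ℝ) • v} := by
    refine ⟨?_, ?_, ?_⟩
    · intro x hx
      simp only [Set.mem_insert_iff, Set.mem_singleton_iff] at hx
      rcases hx with rfl | rfl
      · exact dF13
      · exact dC13
    · refine linearIndepOn_id_pair ?_ ?_
      · intro h
        have := congrFun h 0
        simp [g, v] at this
      · intro a h
        have h0 := congrFun h 0
        have h1 := congrFun h 1
        simp [g, v] at h0 h1
        linarith
    · intro x hx
      simp only [Δ13, Set.mem_insert_iff, Set.mem_singleton_iff] at hx
      rcases hx with rfl | rfl | rfl | rfl | rfl | rfl | rfl | rfl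
      · exact Or.inl m1a
      · exact Or.inr (by rw [Set.mem_neg]; simpa using m1a)
      · exact Or.inl m1b
      · exact Or.inr (by rw [Set.mem_neg]; simpa using m1b)
      · exact Or.inl m1c
      · exact Or.inl m1d
      · exact Or.inr (by rw [Set.mem_neg, show -(-g + v) = g - v by abel]; exact m1d)
      · exact Or.inr (by rw [Set.mem_neg, show -(-g - v) = g + v by abel]; exact m1c)
  -- second base
  have base2 : IsBase Δ13 {v - g, (2 : ℝ) • g} := by
    refine ⟨?_, ?_, ?_⟩
    · intro x hx
      simp only [Set.mem_insert_iff, Set.mem_singleton_iff] at hx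
      rcases hx with rfl | rfl
      · rw [show v - g = -g + v by abel]; exact dG13
      · exact dA13
    · refine linearIndepOn_id_pair ?_ ?_
      · intro h
        have := congrFun h 1
        simp [g, v] at this
      · intro a h
        have h0 := congrFun h 0
        have h1 := congrFun h 1
        simp [g, v] at h0 h1
        linarith
    · intro x hx
      simp only [Δ13, Set.mem_insert_iff, Set.mem_singleton_iff] at hx
      rcases hx with rfl | rfl | rfl | rfl | rfl | rfl | rfl | rfl
      · exact Or.inl m2a
      · exact Or.inr (by rw [Set.mem_neg]; simpa using m2a)
      · exact Or.inl m2b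
      · exact Or.inr (by rw [Set.mem_neg]; simpa using m2b)
      · exact Or.inl m2c
      · exact Or.inr (by rw [Set.mem_neg, show -(g - v) = -g + v by abel]; exact m2d)
      · exact Or.inl m2d
      · exact Or.inr (by rw [Set.mem_neg, show -(-g - v) = g + v by abel]; exact m2c)
  -- the two intersections, explicitly
  have h1 : Δ13 ∩ NComb {g - v, (2 : ℝ) • v}
      = ({(2 : ℝ) • g, (2 : ℝ) • v, g + v, g - v} : Set (Fin 2 → ℝ)) := by
    ext x
    constructor
    · rintro ⟨hx, hN⟩
      simp only [Δ13, Set.mem_insert_iff, Set.mem_singleton_iff] at hx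
      simp only [Set.mem_insert_iff, Set.mem_singleton_iff]
      rcases hx with rfl | rfl | rfl | rfl | rfl | rfl | rfl | rfl
      · tauto
      · exact absurd hN n1a
      · tauto
      · exact absurd hN n1b
      · tauto
      · tauto
      · exact absurd hN n1c
      · exact absurd hN n1d
    · intro hx
      simp only [Set.mem_insert_iff, Set.mem_singleton_iff] at hx
      rcases hx with rfl | rfl | rfl | rfl
      · exact ⟨dA13, m1a⟩
      · exact ⟨dC13, m1b⟩
      · exact ⟨dE13, m1c⟩
      · exact ⟨dF13, m1d⟩
  have hvg : -g + v = v - g := by abel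
  have h2 : Δ13 ∩ NComb {v - g, (2 : ℝ) • g}
      = ({(2 : ℝ) • g, (2 : ℝ) • v, g + v, v - g} : Set (Fin 2 → ℝ)) := by
    ext x
    constructor
    · rintro ⟨hx, hN⟩
      simp only [Δ13, Set.mem_insert_iff, Set.mem_singleton_iff] at hx
      simp only [Set.mem_insert_iff, Set.mem_singleton_iff]
      rcases hx with rfl | rfl | rfl | rfl | rfl | rfl | rfl | rfl
      · tauto
      · exact absurd hN n2a
      · tauto
      · exact absurd hN n2b
      · tauto
      · exact absurd hN n2c
      · exact Or.inr (Or.inr (Or.inr hvg))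
      · exact absurd hN n2d
    · intro hx
      simp only [Set.mem_insert_iff, Set.mem_singleton_iff] at hx
      rcases hx with rfl | rfl | rfl | rfl
      · exact ⟨dA13, m2a⟩
      · exact ⟨dC13, m2b⟩
      · exact ⟨dE13, m2c⟩
      · exact ⟨by rw [← hvg]; exact dG13,
          AddSubmonoid.subset_closure (Set.mem_insert _ _)⟩
  refine ⟨base1, base2, ?_⟩
  rw [h1, h2]
  have ne1 : (2 : ℝ) • g ≠ g - v := by
    intro h; have := congrFun h 0; simp [g, v] at this
  have ne2 : (2 : ℝ) • v ≠ g - v := by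
    intro h; have := congrFun h 0; simp [g, v] at this
  have ne3 : g + v ≠ g - v := by
    intro h; have := congrFun h 1; simp [g, v] at this; linarith
  ext x
  simp only [Set.mem_insert_iff, Set.mem_singleton_iff, Set.mem_diff, Set.mem_union]
  constructor
  · rintro (rfl | rfl | rfl | rfl)
    · exact Or.inl ⟨Or.inl rfl, ne1⟩
    · exact Or.inl ⟨Or.inr (Or.inl rfl), ne2⟩
    · exact Or.inl ⟨Or.inr (Or.inr (Or.inl rfl)), ne3⟩
    · exact Or.inr rfl
  · rintro (⟨(rfl | rfl | rfl | rfl), hne⟩ | rfl)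
    · exact Or.inl rfl
    · exact Or.inr (Or.inl rfl)
    · exact Or.inr (Or.inr (Or.inl rfl))
    · exact absurd rfl hne
    · exact Or.inr (Or.inr (Or.inr rfl))
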